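/- Let P be a finite graded poset of rank d+1. Then P is j-Sing if and only if for every chain C = {0̂ = t_0 < t_1 < ... < t_{i-1} < t_i = 1̂} in P with i > j+1, one has μ_P(0̂,t_1)·μ_P(t_1,t_2)⋯μ_P(t_{i-1},1̂) = (-1)^{d+1}. -/

import Mathlib

open Finset

variable {α : Type*} [Fintype α] [PartialOrder α] [BoundedOrder α] [DecidableEq α]
  [DecidableRel ((· ≤ ·) : α → α → Prop)]

/-- `ρ` is a rank function making `α` a graded poset of rank `d + 1`. -/
def IsGraded (ρ : α → ℕ) (d : ℕ) : Prop :=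
  ρ ⊥ = 0 ∧ ρ ⊤ = d + 1 ∧ (∀ a b : α, a ⋖ b → ρ b = ρ a + 1) ∧
    ∀ a b : α, a < b → ρ a < ρ b

/-- `mu` is the Möbius function of the poset `α`. -/
def IsMobius (mu : α → α → ℤ) : Prop :=
  (∀ a : α, mu a a = 1) ∧
    ∀ a b : α, a < b → ∑ c ∈ Finset.univ.filter (fun c => a ≤ c ∧ c ≤ b), mu a c = 0

/-- `JSing ρ mu n s t` says that the interval `[s, t]` is `(n-1)`-Sing:
`JSing 0` is Eulerian (all subintervals have Möbius value `(-1)^length`),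
`JSing 1` is semi-Eulerian, and `JSing (n+1)` requires every strictly shorter
subinterval to be `JSing n`. -/
def JSing (ρ : α → ℕ) (mu : α → α → ℤ) : ℕ → α → α → Prop
  | 0 => fun s t => ∀ a b : α, s ≤ a → a ≤ b → b ≤ t → mu a b = (-1 : ℤ) ^ (ρ b - ρ a)
  | n + 1 => fun s t => ∀ a b : α, s ≤ a → a ≤ b → b ≤ t →
      ρ b - ρ a < ρ t - ρ s → JSing ρ mu n a b

section Aux

variable (d : ℕ) (ρ : α → ℕ) (mu : α → α → ℤ)

lemma rho_mono (hgr : IsGraded ρ d) {x y : α} (h : x ≤ y) : ρ x ≤ ρ y := by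
  rcases lt_or_eq_of_le h with h | h
  · exact (hgr.2.2.2 _ _ h).le
  · rw [h]

lemma mu_cov (hgr : IsGraded ρ d) (hmu : IsMobius mu) {x y : α} (h : x ⋖ y) :
    mu x y = -1 := by
  have hsum := hmu.2 x y h.1
  have hset : Finset.univ.filter (fun c => x ≤ c ∧ c ≤ y) = {x, y} := by
    ext c
    simp only [Finset.mem_filter, Finset.mem_univ, true_and, Finset.mem_insert,
      Finset.mem_singleton]
    constructor
    · rintro ⟨h1, h2⟩
      rcases lt_or_eq_of_le h1 with h1 | h1
      · rcases lt_or_eq_of_le h2 with h2 | h2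
        · exact absurd h2 (h.2 h1)
        · exact Or.inr h2
      · exact Or.inl h1.symm
    · rintro (rfl | rfl)
      · exact ⟨le_refl _, h.1.le⟩
      · exact ⟨h.1.le, le_refl _⟩
  rw [hset, Finset.sum_pair h.1.ne, hmu.1] at hsum
  linarith

lemma upStep (hgr : IsGraded ρ d) (hmu : IsMobius mu) {x t : α} (h : x < t) :
    ∃ y, x < y ∧ y ≤ t ∧ ρ y = ρ x + 1 ∧ mu x y = -1 := by
  classical
  have hne : (Finset.univ.filter (fun c => x < c ∧ c ≤ t)).Nonempty :=
    ⟨t, by simp [h]⟩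
  obtain ⟨y, hy, hmin⟩ : ∃ y ∈ Finset.univ.filter (fun c => x < c ∧ c ≤ t), ∀ z ∈ Finset.univ.filter (fun c => x < c ∧ c ≤ t), ¬ z < y := by
    obtain ⟨y, hy, hm⟩ := Finset.exists_minimal hne
    exact ⟨y, hy, fun z hz hzy => lt_irrefl _ (lt_of_lt_of_le hzy (hm hz hzy.le))⟩
  simp only [Finset.mem_filter, Finset.mem_univ, true_and] at hy
  have hcov : x ⋖ y := by
    refine ⟨hy.1, fun c hc1 hc2 => ?_⟩
    exact hmin c (by simp [hc1, le_trans hc2.le hy.2]) hc2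
  exact ⟨y, hy.1, hy.2, hgr.2.2.1 _ _ hcov, mu_cov d ρ mu hgr hmu hcov⟩

lemma downStep (hgr : IsGraded ρ d) {s x : α} (h : s < x) :
    ∃ y, s ≤ y ∧ y < x ∧ ρ x = ρ y + 1 := by
  classical
  have hne : (Finset.univ.filter (fun c => s ≤ c ∧ c < x)).Nonempty :=
    ⟨s, by simp [h]⟩
  obtain ⟨y, hy, hmax⟩ : ∃ y ∈ Finset.univ.filter (fun c => s ≤ c ∧ c < x), ∀ z ∈ Finset.univ.filter (fun c => s ≤ c ∧ c < x), ¬ y < z := by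
    obtain ⟨y, hy, hm⟩ := Finset.exists_maximal hne
    exact ⟨y, hy, fun z hz hzy => lt_irrefl _ (lt_of_lt_of_le hzy (hm hz hzy.le))⟩
  simp only [Finset.mem_filter, Finset.mem_univ, true_and] at hy
  have hcov : y ⋖ x := by
    refine ⟨hy.2, fun c hc1 hc2 => ?_⟩
    exact hmax c (by simp [hc2, le_trans hy.1 hc1.le]) hc1
  exact ⟨y, hy.1, hy.2, hgr.2.2.1 _ _ hcov⟩

lemma eq_of_le_rho (hgr : IsGraded ρ d) {x y : α} (h : x ≤ y) (hr : ρ x = ρ y) :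
    x = y := by
  rcases lt_or_eq_of_le h with h | h
  · exact absurd hr (hgr.2.2.2 _ _ h).ne
  · exact h

/-- Multi-step extension of an interval within `[s,t]`. -/
lemma extend (hgr : IsGraded ρ d) (hmu : IsMobius mu) {s t : α} :
    ∀ (k : ℕ) {a b : α}, s ≤ a → a ≤ b → b ≤ t → ρ b - ρ a + k ≤ ρ t - ρ s →
    ∃ a' b', s ≤ a' ∧ a' ≤ a ∧ b ≤ b' ∧ b' ≤ t ∧ ρ b' - ρ a' = ρ b - ρ a + k := by
  intro k
  induction k with
  | zero => exact fun hsa hab hbt _ => ⟨_, _, hsa, le_refl _, le_refl _, hbt, by omega⟩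
  | succ k ih =>
    intro a b hsa hab hbt hk
    obtain ⟨a', b', hsa', ha', hb', hb't, hlen⟩ := ih hsa hab hbt (by omega)
    have h1 := rho_mono d ρ hgr hsa
    have h2 := rho_mono d ρ hgr hab
    have h3 := rho_mono d ρ hgr hbt
    have h4 := rho_mono d ρ hgr hsa'
    have h5 := rho_mono d ρ hgr ha'
    have h6 := rho_mono d ρ hgr hb'
    have h7 := rho_mono d ρ hgr hb't
    have h8 := rho_mono d ρ hgr (le_trans ha' (le_trans hab hb'))
    by_cases hc : ρ s < ρ a'
    · have hlt : s < a' := lt_of_le_of_ne hsa' (by rintro rfl; omega)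
      obtain ⟨y, hy1, hy2, hy3⟩ := downStep d ρ hgr hlt
      exact ⟨y, b', hy1, le_trans hy2.le ha', hb', hb't, by omega⟩
    · have hbt' : b' < t := lt_of_le_of_ne hb't (by rintro rfl; omega)
      obtain ⟨y, hy1, hy2, hy3, _⟩ := upStep d ρ mu hgr hmu hbt'
      exact ⟨a', y, hsa', ha', le_trans hb' hy1.le, hy2, by omega⟩

/-- Product of Möbius values over consecutive pairs of a list. -/
def muProd (mu : α → α → ℤ) : List α → ℤ
  | [] => 1
  | [_] => 1
  | a :: b :: l => mu a b * muProd mu (b :: l)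

lemma muProd_glue : ∀ (l : List α) (x : α) (l' : List α),
    muProd mu (l ++ x :: l') = muProd mu (l ++ [x]) * muProd mu (x :: l') := by
  intro l
  induction l with
  | nil => intro x l'; simp [muProd]
  | cons y l ih =>
    intro x l'
    cases l with
    | nil => cases l' <;> simp [muProd]
    | cons z l'' =>
      have := ih x l'
      simp only [List.cons_append, List.append_eq, muProd] at this ⊢
      rw [this]; ring

lemma prod_eq_muProd : ∀ (i : ℕ) (t : Fin (i + 1) → α),
    ∏ k : Fin i, mu (t k.castSucc) (t k.succ) = muProd mu (List.ofFn t) := by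
  intro i
  induction i with
  | zero => intro t; simp [muProd, List.ofFn_succ]
  | succ i ih =>
    intro t
    rw [Fin.prod_univ_succ, List.ofFn_succ, List.ofFn_succ]
    have h2 := ih (t ∘ Fin.succ)
    rw [List.ofFn_succ] at h2
    simp only [muProd]
    congr 1

/-- A saturated chain from `x` up to `a`, as a list. -/
lemma midChain (hgr : IsGraded ρ d) (hmu : IsMobius mu) (a : α) :
    ∀ (k : ℕ) (x : α), x ≤ a → ρ a - ρ x = k →
    ∃ l : List α, List.Chain' (· < ·) (x :: l) ∧ (x :: l).getLast (by simp) = a ∧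
      (x :: l).length = k + 1 ∧ muProd mu (x :: l) = (-1) ^ k := by
  intro k
  induction k with
  | zero =>
    intro x hx hk
    have hr := rho_mono d ρ hgr hx
    have : x = a := eq_of_le_rho d ρ hgr hx (by omega)
    subst this
    exact ⟨[], List.isChain_singleton x, rfl, rfl, rfl⟩
  | succ k ih =>
    intro x hx hk
    have hr := rho_mono d ρ hgr hx
    have hlt : x < a := lt_of_le_of_ne hx (by rintro rfl; omega)
    obtain ⟨y, hy1, hy2, hy3, hy4⟩ := upStep d ρ mu hgr hmu hlt
    have hr2 := rho_mono d ρ hgr hy2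
    obtain ⟨l, hl1, hl2, hl3, hl4⟩ := ih y hy2 (by omega)
    refine ⟨y :: l, List.isChain_cons_cons.2 ⟨hy1, hl1⟩, hl2, by simp at hl3 ⊢; omega, ?_⟩
    show mu x y * muProd mu (y :: l) = _
    rw [hy4, hl4]; ring

lemma jsing_of_eulerian (hgr : IsGraded ρ d) : ∀ (n : ℕ) (s t : α),
    (∀ a b : α, s ≤ a → a ≤ b → b ≤ t → ρ b - ρ a + n ≤ ρ t - ρ s →
      mu a b = (-1 : ℤ) ^ (ρ b - ρ a)) →
    JSing ρ mu n s t := by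
  intro n
  induction n with
  | zero =>
    intro s t h a b hsa hab hbt
    apply h a b hsa hab hbt
    have h1 := rho_mono d ρ hgr hsa
    have h2 := rho_mono d ρ hgr hab
    have h3 := rho_mono d ρ hgr hbt
    omega
  | succ n ih =>
    intro s t h a b hsa hab hbt hlt
    apply ih a b
    intro a' b' h1 h2 h3 h4
    exact h a' b' (le_trans hsa h1) h2 (le_trans h3 hbt) (by omega)

lemma eulerian_of_jsing (hgr : IsGraded ρ d) (hmu : IsMobius mu) :
    ∀ (n : ℕ) (s t : α), JSing ρ mu n s t →
    ∀ a b : α, s ≤ a → a ≤ b → b ≤ t → ρ b - ρ a + n ≤ ρ t - ρ s →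
      mu a b = (-1 : ℤ) ^ (ρ b - ρ a) := by
  intro n
  induction n with
  | zero => intro s t h a b h1 h2 h3 _; exact h a b h1 h2 h3
  | succ n ih =>
    intro s t h a b h1 h2 h3 h4
    obtain ⟨a', b', hsa', ha', hb', hb't, hlen⟩ :=
      extend d ρ mu hgr hmu n h1 h2 h3 (by omega)
    have hstep : JSing ρ mu n a' b' :=
      h a' b' hsa' (le_trans ha' (le_trans h2 hb')) hb't (by omega)
    exact ih a' b' hstep a b ha' h2 hb' (by omega)

lemma chain_lb (hgr : IsGraded ρ d) {i : ℕ} {t : Fin (i + 1) → α} (ht : StrictMono t) :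
    ∀ m : Fin (i + 1), ρ (t 0) + (m : ℕ) ≤ ρ (t m) := by
  intro m
  induction m using Fin.induction with
  | zero => simp
  | succ k ih =>
    have h := hgr.2.2.2 _ _ (ht (Fin.castSucc_lt_succ (i := k)))
    rw [Fin.coe_castSucc] at ih
    rw [Fin.val_succ]
    omega

lemma chain_ub (hgr : IsGraded ρ d) {i : ℕ} {t : Fin (i + 1) → α} (ht : StrictMono t) :
    ∀ m : Fin (i + 1), ρ (t m) + (i - (m : ℕ)) ≤ ρ (t (Fin.last i)) := by
  intro m
  induction m using Fin.reverseInduction with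
  | last => simp
  | cast k ih =>
    have h := hgr.2.2.2 _ _ (ht (Fin.castSucc_lt_succ (i := k)))
    rw [Fin.val_succ] at ih
    rw [Fin.coe_castSucc]
    have hk : (k : ℕ) < i := k.isLt
    omega

lemma telescope : ∀ (i : ℕ) (f : Fin (i + 1) → ℕ),
    (∀ p q : Fin (i + 1), p ≤ q → f p ≤ f q) →
    ∑ k : Fin i, (f k.succ - f k.castSucc) = f (Fin.last i) - f 0 := by
  intro i
  induction i with
  | zero => intro f _; simp
  | succ i ih =>
    intro f hf
    rw [Fin.sum_univ_castSucc]
    have h2 : ∑ k : Fin i, (f k.castSucc.succ - f k.castSucc.castSucc)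
        = f (Fin.last i).castSucc - f 0 :=
      ih (f ∘ Fin.castSucc) (fun p q hpq => hf _ _ (by simpa using hpq))
    rw [h2]
    have m1 := hf 0 (Fin.last i).castSucc (Fin.zero_le _)
    have m2 := hf (Fin.last i).castSucc ((Fin.last i).succ) (Fin.castSucc_lt_succ (i := _)).le
    rw [Fin.succ_last]
    rw [Fin.succ_last] at m2
    simp only [Nat.succ_eq_add_one] at *
    omega

lemma ofFn_get_cast (l : List α) (i : ℕ) (h : i + 1 = l.length) :
    List.ofFn (fun k : Fin (i + 1) => l.get (Fin.cast h k)) = l := by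
  apply List.ext_get
  · simp [← h]
  · intro m h1 h2
    rw [List.get_ofFn]
    rfl

end Aux

/-- a graded poset of rank `d+1` is `j`-Sing if and only if for every chain
`0̂ = t_0 < t_1 < ... < t_i = 1̂` with `i > j + 1`, the product of the Möbius values of
consecutive intervals equals `(-1)^{d+1}`. -/
theorem jSing_iff_chain_products (d : ℕ) (ρ : α → ℕ) (mu : α → α → ℤ)
    (hgr : IsGraded ρ d) (hmu : IsMobius mu)
    (j : ℤ) (hj : -1 ≤ j) (hjd : j ≤ d) :
    JSing ρ mu (j + 1).toNat ⊥ ⊤ ↔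
      ∀ (i : ℕ) (t : Fin (i + 1) → α), StrictMono t → t 0 = ⊥ → t (Fin.last i) = ⊤ →
        j + 1 < (i : ℤ) →
        ∏ k : Fin i, mu (t k.castSucc) (t k.succ) = (-1 : ℤ) ^ (d + 1) := by
  set n := (j + 1).toNat with hn
  have hnj : (n : ℤ) = j + 1 := Int.toNat_of_nonneg (by omega)
  have hnd : n ≤ d + 1 := by omega
  constructor
  · -- forward
    intro hJ i t ht h0 hlast hi
    have hin : n + 1 ≤ i := by
      have : (n : ℤ) < (i : ℤ) := by rw [hnj]; exact hi
      exact_mod_cast this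
    have hρ0 : ρ (t 0) = 0 := by rw [h0, hgr.1]
    have hρl : ρ (t (Fin.last i)) = d + 1 := by rw [hlast, hgr.2.1]
    have key : ∀ k : Fin i, mu (t k.castSucc) (t k.succ)
        = (-1 : ℤ) ^ (ρ (t k.succ) - ρ (t k.castSucc)) := by
      intro k
      apply eulerian_of_jsing d ρ mu hgr hmu n ⊥ ⊤ hJ _ _ bot_le
        (ht (Fin.castSucc_lt_succ (i := k))).le le_top
      rw [hgr.1, hgr.2.1]
      have l1 := chain_lb d ρ hgr ht k.castSucc
      have l2 := chain_ub d ρ hgr ht k.succ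
      rw [hρ0] at l1
      rw [hρl] at l2
      rw [Fin.coe_castSucc] at l1
      rw [Fin.val_succ] at l2
      have hk : (k : ℕ) < i := k.isLt
      have hm := rho_mono d ρ hgr (ht (Fin.castSucc_lt_succ (i := k))).le
      omega
    rw [Finset.prod_congr rfl (fun k _ => key k), Finset.prod_pow_eq_pow_sum]
    congr 1
    rw [telescope i (fun m => ρ (t m)) (fun p q hpq => rho_mono d ρ hgr (ht.monotone hpq))]
    rw [hρl, hρ0]
    omega
  · -- backward
    intro hC
    apply jsing_of_eulerian d ρ mu hgr
    intro a b hba hab hbt hlen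
    rw [hgr.1, hgr.2.1] at hlen
    rcases eq_or_lt_of_le hab with rfl | hlt
    · simp [hmu.1]
    · have hρab := rho_mono d ρ hgr hab
      have hρb : ρ b ≤ d + 1 := by
        have := rho_mono d ρ hgr (le_top : b ≤ ⊤); rw [hgr.2.1] at this; exact this
      obtain ⟨l1, hc1, hl1last, hl1len, hl1prod⟩ :=
        midChain d ρ mu hgr hmu a (ρ a) ⊥ bot_le (by rw [hgr.1]; omega)
      obtain ⟨l2, hc2, hl2last, hl2len, hl2prod⟩ :=
        midChain d ρ mu hgr hmu ⊤ (d + 1 - ρ b) b le_top (by rw [hgr.2.1])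
      set L : List α := (⊥ :: l1) ++ (b :: l2) with hL
      have hchain : List.Chain' (· < ·) L := by
        show List.IsChain (· < ·) L
        rw [List.isChain_append]
        refine ⟨hc1, hc2, ?_⟩
        intro x hx y hy
        have hx' : x = a := by
          rw [List.getLast?_eq_getLast (l := ⊥ :: l1) (by simp)] at hx
          simp at hx
          rw [← hx]; exact hl1last
        have hy' : y = b := by simp at hy; exact hy.symm
        rw [hx', hy']; exact hlt
      set i : ℕ := ρ a + 1 + (d + 1 - ρ b) with hi
      have hLlen : i + 1 = L.length := by
        rw [hL]
        simp only [List.length_append, List.length_cons]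
        simp only [List.length_cons] at hl1len hl2len
        omega
      set t : Fin (i + 1) → α := fun k => L.get (Fin.cast hLlen k) with htdef
      have hofn : List.ofFn t = L := ofFn_get_cast L i hLlen
      have hpw := (List.isChain_iff_pairwise.1 hchain)
      have hsm : StrictMono t := by
        intro p q hpq
        exact List.pairwise_iff_get.1 hpw _ _ (by simpa using hpq)
      have hLne : L ≠ [] := by rw [hL]; simp
      have ht0 : t 0 = ⊥ := rfl
      have hq : L.getLast? = some ⊤ := by
        rw [hL, List.getLast?_append_cons,
          List.getLast?_eq_getLast (l := b :: l2) (by simp), hl2last]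
      have hlen1 : 1 ≤ L.length := by omega
      have h8 : L.get ⟨L.length - 1, by omega⟩ = ⊤ := by
        rw [List.getLast?_eq_getLast hLne] at hq
        have h9 := Option.some_injective _ hq
        rw [← h9]; exact (List.getLast_eq_getElem hLne).symm
      have htl : t (Fin.last i) = ⊤ := by
        have hidx : (Fin.cast hLlen (Fin.last i)) = (⟨L.length - 1, by omega⟩ : Fin L.length) := by
          apply Fin.ext
          show i = L.length - 1
          omega
        show L.get (Fin.cast hLlen (Fin.last i)) = ⊤
        rw [hidx]
        exact h8
      have hilarge : j + 1 < (i : ℤ) := by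
        rw [← hnj]
        have : n < i := by omega
        exact_mod_cast this
      have hprod := hC i t hsm ht0 htl hilarge
      rw [prod_eq_muProd, hofn] at hprod
      -- compute muProd L
      have hsplit : (⊥ :: l1) = (⊥ :: l1).dropLast ++ [a] := by
        conv_lhs => rw [← List.dropLast_append_getLast (l := ⊥ :: l1) (by simp)]
        rw [hl1last]
      have hmuL : muProd mu L = (-1 : ℤ) ^ (ρ a) * (mu a b * (-1 : ℤ) ^ (d + 1 - ρ b)) := by
        rw [hL, hsplit, List.append_assoc, List.singleton_append, muProd_glue, ← hsplit, hl1prod]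
        have : muProd mu (a :: b :: l2) = mu a b * muProd mu (b :: l2) := rfl
        rw [this, hl2prod]
      rw [hmuL] at hprod
      -- solve for mu a b
      have hsum : ρ a + (d + 1 - ρ b) + (ρ b - ρ a) = d + 1 := by omega
      have hne : ((-1 : ℤ) ^ (ρ a) * (-1 : ℤ) ^ (d + 1 - ρ b)) ≠ 0 := by
        apply mul_ne_zero <;> exact pow_ne_zero _ (by norm_num)
      apply mul_left_cancel₀ hne
      calc ((-1 : ℤ) ^ (ρ a) * (-1 : ℤ) ^ (d + 1 - ρ b)) * mu a b
          = (-1 : ℤ) ^ (ρ a) * (mu a b * (-1 : ℤ) ^ (d + 1 - ρ b)) := by ring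
        _ = (-1 : ℤ) ^ (d + 1) := hprod
        _ = ((-1 : ℤ) ^ (ρ a) * (-1 : ℤ) ^ (d + 1 - ρ b)) * (-1 : ℤ) ^ (ρ b - ρ a) := by
            rw [← pow_add, ← pow_add, hsum]
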